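/- Let m, k ∈ ℕ and let G be an m-joined graph. Let v ∈ V(G) and let Z ⊆ V(G) \ {v}. If d(v) ≥ |Z| + 2m + 2k, then there exist k pairwise disjoint edges of G whose endpoints all lie in N(v) \ Z; in particular, G contains k triangles through v that pairwise intersect only in v and avoid Z \ {v}. -/
import Mathlib


open SimpleGraph

/-- `G` is `m`-joined: between any two disjoint vertex sets of size `m` there is an edge. -/
def IsJoined {V : Type*} (G : SimpleGraph V) (m : ℕ) : Prop :=
  ∀ A B : Finset V, Disjoint A B → A.card = m → B.card = m →
    ∃ a ∈ A, ∃ b ∈ B, G.Adj a b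

lemma cons_elim_inj {V : Type*} {k : ℕ} {x y : Fin k → V} {a b : V}
    (hab : a ≠ b)
    (hxa : ∀ i, x i ≠ a) (hxb : ∀ i, x i ≠ b)
    (hya : ∀ i, y i ≠ a) (hyb : ∀ i, y i ≠ b)
    (hinj : Function.Injective (Sum.elim x y)) :
    Function.Injective (Sum.elim (Fin.cons a x) (Fin.cons b y) :
      Fin (k+1) ⊕ Fin (k+1) → V) := by
  rintro (i | i) (j | j) h <;>
    rcases Fin.eq_zero_or_eq_succ i with rfl | ⟨i', rfl⟩ <;>
    rcases Fin.eq_zero_or_eq_succ j with rfl | ⟨j', rfl⟩ <;>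
    simp only [Sum.elim_inl, Sum.elim_inr, Fin.cons_zero, Fin.cons_succ] at h ⊢ <;>
  first
  | rfl
  | exact absurd h (hxa _)
  | exact absurd h.symm (hxa _)
  | exact absurd h (hxb _)
  | exact absurd h.symm (hxb _)
  | exact absurd h (hya _)
  | exact absurd h.symm (hya _)
  | exact absurd h (hyb _)
  | exact absurd h.symm (hyb _)
  | exact absurd h hab
  | exact absurd h.symm hab
  | (have h2 : (Sum.inl i' : Fin k ⊕ Fin k) = Sum.inl j' := hinj h
     injection h2 with h3
     rw [h3])
  | (have h2 : (Sum.inr i' : Fin k ⊕ Fin k) = Sum.inr j' := hinj h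
     injection h2 with h3
     rw [h3])
  | (have h2 : (Sum.inl i' : Fin k ⊕ Fin k) = Sum.inr j' := hinj h
     simp at h2)
  | (have h2 : (Sum.inr i' : Fin k ⊕ Fin k) = Sum.inl j' := hinj h
     simp at h2)

/-- Claim 3.9-style greedy step: if `G` is `m`-joined, `v ∉ Z` and
`d(v) ≥ |Z| + 2m + 2k`, then there are `k` pairwise disjoint edges whose
endpoints all lie in `N(v) \ Z`; equivalently, `k` triangles through `v`
pairwise intersecting only in `v` and avoiding `Z`. -/
theorem disjoint_edges_in_neighbourhood (m k : ℕ)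
    (V : Type) [Fintype V] [DecidableEq V] (G : SimpleGraph V) [DecidableRel G.Adj]
    (hG : IsJoined G m) (v : V) (Z : Finset V) (hvZ : v ∉ Z)
    (hd : Z.card + 2 * m + 2 * k ≤ G.degree v) :
    ∃ x y : Fin k → V,
      (∀ i, G.Adj (x i) (y i)) ∧
      (∀ i, x i ∈ G.neighborFinset v \ Z) ∧
      (∀ i, y i ∈ G.neighborFinset v \ Z) ∧
      Function.Injective (Sum.elim x y : Fin k ⊕ Fin k → V) := by
  induction k generalizing Z with
  | zero =>
    refine ⟨Fin.elim0, Fin.elim0, fun i => i.elim0, fun i => i.elim0, fun i => i.elim0, ?_⟩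
    rintro (i | i) _ _ <;> exact i.elim0
  | succ k ih =>
    -- the available neighbourhood
    set S : Finset V := G.neighborFinset v \ Z with hS
    have hScard : 2 * m + 2 * k + 2 ≤ S.card := by
      have h1 : (G.neighborFinset v).card ≤ S.card + Z.card :=
        Finset.card_le_card_sdiff_add_card
      have h2 : (G.neighborFinset v).card = G.degree v := G.card_neighborFinset_eq_degree v
      omega
    rcases Nat.eq_zero_or_pos m with rfl | hm
    · obtain ⟨a, ha, -⟩ := hG ∅ ∅ (by simp) rfl rfl
      simp at ha
    obtain ⟨A, hAS, hA⟩ := Finset.exists_subset_card_eq (show m ≤ S.card by omega)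
    have hSA : m ≤ (S \ A).card := by
      have := Finset.card_le_card_sdiff_add_card (s := S) (t := A)
      omega
    obtain ⟨B, hBS, hB⟩ := Finset.exists_subset_card_eq hSA
    have hdisj : Disjoint A B :=
      (Finset.sdiff_disjoint.mono_left hBS).symm
    obtain ⟨a, haA, b, hbB, hab⟩ := hG A B hdisj hA hB
    have haS : a ∈ S := hAS haA
    have hbS : b ∈ S := (Finset.mem_sdiff.mp (hBS hbB)).1
    have hane : a ≠ b := fun h => (Finset.disjoint_left.mp hdisj haA) (h ▸ hbB)
    have haN : a ∈ G.neighborFinset v := (Finset.mem_sdiff.mp haS).1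
    have hbN : b ∈ G.neighborFinset v := (Finset.mem_sdiff.mp hbS).1
    have haZ : a ∉ Z := (Finset.mem_sdiff.mp haS).2
    have hbZ : b ∉ Z := (Finset.mem_sdiff.mp hbS).2
    -- the enlarged forbidden set
    set Z' : Finset V := insert a (insert b Z) with hZ'
    have hvZ' : v ∉ Z' := by
      have hva : v ≠ a := fun h => G.irrefl (h ▸ (G.mem_neighborFinset v a).mp haN)
      have hvb : v ≠ b := fun h => G.irrefl (h ▸ (G.mem_neighborFinset v b).mp hbN)
      simp [hZ', hva, hvb, hvZ]
    have hZ'card : Z'.card ≤ Z.card + 2 := by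
      calc Z'.card ≤ (insert b Z).card + 1 := Finset.card_insert_le _ _
        _ ≤ Z.card + 1 + 1 := by
            have := Finset.card_insert_le b Z
            omega
        _ = Z.card + 2 := by omega
    have hd' : Z'.card + 2 * m + 2 * k ≤ G.degree v := by omega
    obtain ⟨x, y, hadj, hx, hy, hinj⟩ := ih Z' hvZ' hd'
    have hxa : ∀ i, x i ≠ a := fun i h =>
      (Finset.mem_sdiff.mp (hx i)).2 (h ▸ Finset.mem_insert_self a _)
    have hxb : ∀ i, x i ≠ b := fun i h =>
      (Finset.mem_sdiff.mp (hx i)).2 (h ▸ Finset.mem_insert_of_mem (Finset.mem_insert_self b _))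
    have hya : ∀ i, y i ≠ a := fun i h =>
      (Finset.mem_sdiff.mp (hy i)).2 (h ▸ Finset.mem_insert_self a _)
    have hyb : ∀ i, y i ≠ b := fun i h =>
      (Finset.mem_sdiff.mp (hy i)).2 (h ▸ Finset.mem_insert_of_mem (Finset.mem_insert_self b _))
    have hsub : ∀ w : V, w ∈ G.neighborFinset v \ Z' → w ∈ G.neighborFinset v \ Z := by
      intro w hw
      rw [Finset.mem_sdiff] at hw ⊢
      exact ⟨hw.1, fun h => hw.2 (Finset.mem_insert_of_mem (Finset.mem_insert_of_mem h))⟩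
    refine ⟨Fin.cons a x, Fin.cons b y, ?_, ?_, ?_, ?_⟩
    · intro i
      rcases Fin.eq_zero_or_eq_succ i with rfl | ⟨i', rfl⟩
      · simpa using hab
      · simpa using hadj i'
    · intro i
      rcases Fin.eq_zero_or_eq_succ i with rfl | ⟨i', rfl⟩
      · simpa using haS
      · simp only [Fin.cons_succ]; exact hsub _ (hx i')
    · intro i
      rcases Fin.eq_zero_or_eq_succ i with rfl | ⟨i', rfl⟩
      · simpa using hbS
      · simp only [Fin.cons_succ]; exact hsub _ (hy i')
    · exact cons_elim_inj hane hxa hxb hya hyb hinj
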